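/- Under the linear herding model with no misbehaving ratings, suppose α has a unique largest entry, with largest value α_max attained at m* and second largest value α_secmax = max_{m ≠ m*} α_m < α_max. For the majority rule A(x) = argmax_{m∈𝓜} x_m the following holds: for any δ ∈ (0,1), if the number of ratings i satisfies φ_i ≥ (M²(M+1)²/(α_max − α_secmax)²)·ln(2M/δ), then with probability at least 1 − δ the entry β_{i,m*} is strictly larger than β_{i,m} for every m ≠ m* (so A(β_i) = A(α) = m*). -/

import Mathlib

open MeasureTheory Filter

/-- Cumulative weight `∑_{j=1}^i w_j`. -/
noncomputable def Sw (w : ℕ → ℝ) (i : ℕ) : ℝ := ∑ j ∈ Finset.Icc 1 i, w j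

/-- Normalized weight `w̃_i = w_i / ∑_{j=1}^i w_j`. -/
noncomputable def wnorm (w : ℕ → ℝ) (i : ℕ) : ℝ := w i / Sw w i

/-- Historical collective opinion
`β_{i,m} = (∑_{j=1}^i w_j 1{R_j = m}) / (∑_{j=1}^i w_j)`. -/
noncomputable def betaH {Ω : Type*} (w : ℕ → ℝ) (R : ℕ → Ω → ℕ) (i m : ℕ) (ω : Ω) : ℝ :=
  (∑ j ∈ Finset.Icc 1 i, w j * (if R j ω = m then (1 : ℝ) else 0)) / Sw w i

/-- `𝓗_i`: the σ-algebra generated by `R_1, …, R_i` (trivial for `i = 0`). -/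
def Hsig {Ω : Type*} (R : ℕ → Ω → ℕ) (i : ℕ) : MeasurableSpace Ω :=
  ⨆ j ∈ Finset.Icc 1 i, MeasurableSpace.comap (R j) ⊤

/-- `ϕ_j = ∏_{ℓ=1}^j [1 − w̃_{ℓ+1} (1 − γ_ℓ + η_ℓ γ_ℓ)]` (with `ϕ_0 = 1`). -/
noncomputable def varphi (wt γ η : ℕ → ℝ) (j : ℕ) : ℝ :=
  ∏ ℓ ∈ Finset.Icc 1 j, (1 - wt (ℓ + 1) * (1 - γ ℓ + η ℓ * γ ℓ))

/-- Convergence-speed metric `φ_i = 1 / ((ϕ_{i−1}²/2) · ∑_{j=1}^i w̃_j²/ϕ_{j−1}²)`. -/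
noncomputable def phiSpeed (wt γ η : ℕ → ℝ) (i : ℕ) : ℝ :=
  1 / ((varphi wt γ η (i - 1)) ^ 2 / 2 *
    ∑ j ∈ Finset.Icc 1 i, (wt j) ^ 2 / (varphi wt γ η (j - 1)) ^ 2)


lemma herd_exp_le (a x : ℝ) (hx : |x| ≤ 1) :
    Real.exp (a * x) ≤ Real.cosh a + x * Real.sinh a := by
  obtain ⟨h1, h2⟩ := abs_le.1 hx
  have h3 : (0:ℝ) ≤ (1+x)/2 := by linarith
  have h4 : (0:ℝ) ≤ (1-x)/2 := by linarith
  have h5 : (1+x)/2 + (1-x)/2 = 1 := by ring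
  have := convexOn_exp.2 (Set.mem_univ a) (Set.mem_univ (-a)) h3 h4 h5
  simp only [smul_eq_mul] at this
  have he : (1+x)/2 * a + (1-x)/2 * (-a) = a * x := by ring
  rw [he] at this
  refine this.trans_eq ?_
  rw [Real.cosh_eq, Real.sinh_eq]; ring

lemma herd_integrable_of_bound {Ω : Type*} [MeasurableSpace Ω] (μ : Measure Ω)
    [IsFiniteMeasure μ] (f : Ω → ℝ) (C : ℝ) (hf : Measurable f)
    (hC : ∀ ω, |f ω| ≤ C) : Integrable f μ :=
  (integrable_const C).mono' hf.aestronglyMeasurable (ae_of_all _ (by simpa using hC))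

lemma herd_key_mgf {Ω : Type*} [MeasurableSpace Ω] (μ : Measure Ω) [IsProbabilityMeasure μ]
    (g X q : Ω → ℝ) (c Cg : ℝ)
    (hg : Measurable g) (hg0 : ∀ ω, 0 ≤ g ω) (hgC : ∀ ω, |g ω| ≤ Cg)
    (hX : Measurable X) (hq : Measurable q)
    (hX1 : ∀ ω, |X ω| ≤ 1) (hq1 : ∀ ω, |q ω| ≤ 1) (hXq : ∀ ω, |X ω - q ω| ≤ 1)
    (horth : ∫ ω, g ω * X ω ∂μ = ∫ ω, g ω * q ω ∂μ) :
    ∫ ω, g ω * Real.exp (c * (X ω - q ω)) ∂μ ≤ Real.exp (c ^ 2 / 2) * ∫ ω, g ω ∂μ := by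
  have hgi : Integrable g μ := herd_integrable_of_bound μ g Cg hg hgC
  have hgXi : Integrable (fun ω => g ω * X ω) μ := by
    refine herd_integrable_of_bound μ _ Cg (hg.mul hX) fun ω => ?_
    rw [abs_mul]
    have := mul_le_mul (hgC ω) (hX1 ω) (abs_nonneg _) ((abs_nonneg (g ω)).trans (hgC ω))
    simpa using this
  have hgqi : Integrable (fun ω => g ω * q ω) μ := by
    refine herd_integrable_of_bound μ _ Cg (hg.mul hq) fun ω => ?_
    rw [abs_mul]
    have := mul_le_mul (hgC ω) (hq1 ω) (abs_nonneg _) ((abs_nonneg (g ω)).trans (hgC ω))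
    simpa using this
  have hLi : Integrable (fun ω => g ω * Real.exp (c * (X ω - q ω))) μ := by
    refine herd_integrable_of_bound μ _ (Cg * Real.exp |c|) (hg.mul (((hX.sub hq).const_mul c).exp)) fun ω => ?_
    rw [abs_mul, abs_of_pos (Real.exp_pos _)]
    refine mul_le_mul (hgC ω) ?_ (Real.exp_pos _).le ((abs_nonneg (g ω)).trans (hgC ω))
    refine Real.exp_le_exp.2 ?_
    calc c * (X ω - q ω) ≤ |c * (X ω - q ω)| := le_abs_self _
    _ = |c| * |X ω - q ω| := abs_mul _ _
    _ ≤ |c| * 1 := mul_le_mul_of_nonneg_left (hXq ω) (abs_nonneg c)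
    _ = |c| := mul_one _
  have hRi : Integrable (fun ω => g ω * (Real.cosh c + (X ω - q ω) * Real.sinh c)) μ := by
    have : (fun ω => g ω * (Real.cosh c + (X ω - q ω) * Real.sinh c))
        = fun ω => g ω * Real.cosh c + (g ω * X ω - g ω * q ω) * Real.sinh c := by
      funext ω; ring
    rw [this]
    exact (hgi.mul_const _).add (((hgXi.sub hgqi).mul_const _))
  have step1 : ∫ ω, g ω * Real.exp (c * (X ω - q ω)) ∂μ
      ≤ ∫ ω, g ω * (Real.cosh c + (X ω - q ω) * Real.sinh c) ∂μ := by
    refine integral_mono hLi hRi fun ω => ?_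
    exact mul_le_mul_of_nonneg_left (herd_exp_le c _ (hXq ω)) (hg0 ω)
  have step2 : ∫ ω, g ω * (Real.cosh c + (X ω - q ω) * Real.sinh c) ∂μ
      = Real.cosh c * ∫ ω, g ω ∂μ := by
    have : (fun ω => g ω * (Real.cosh c + (X ω - q ω) * Real.sinh c))
        = fun ω => Real.cosh c * g ω + (g ω * X ω - g ω * q ω) * Real.sinh c := by
      funext ω; ring
    have h1 : Integrable (fun ω => Real.cosh c * g ω) μ := hgi.const_mul _
    have h2 : Integrable (fun ω => (g ω * X ω - g ω * q ω) * Real.sinh c) μ :=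
      (hgXi.sub hgqi).mul_const _
    rw [this, integral_add h1 h2, integral_const_mul, integral_mul_const,
      integral_sub hgXi hgqi, horth]
    ring
  have step3 : Real.cosh c * ∫ ω, g ω ∂μ ≤ Real.exp (c ^ 2 / 2) * ∫ ω, g ω ∂μ := by
    refine mul_le_mul_of_nonneg_right (Real.cosh_le_exp_half_sq c)
      (integral_nonneg hg0)
  exact (step1.trans_eq step2).trans step3

lemma herd_orth {Ω : Type*} [m0 : MeasurableSpace Ω] (μ : Measure Ω) [IsProbabilityMeasure μ]
    {F : MeasurableSpace Ω} (hF : F ≤ m0) (g X q : Ω → ℝ)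
    (hgF : StronglyMeasurable[F] g)
    (hgXi : Integrable (fun ω => g ω * X ω) μ) (hgqi : Integrable (fun ω => g ω * q ω) μ)
    (hXi : Integrable X μ)
    (hcond : μ[X|F] =ᵐ[μ] q) :
    ∫ ω, g ω * X ω ∂μ = ∫ ω, g ω * q ω ∂μ := by
  have hmul : μ[fun ω => g ω * X ω|F] =ᵐ[μ] fun ω => g ω * (μ[X|F]) ω :=
    condExp_mul_of_stronglyMeasurable_left hgF hgXi hXi
  have h2 : (fun ω => g ω * (μ[X|F]) ω) =ᵐ[μ] fun ω => g ω * q ω := by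
    filter_upwards [hcond] with ω hω; rw [hω]
  calc ∫ ω, g ω * X ω ∂μ = ∫ ω, (μ[fun ω => g ω * X ω|F]) ω ∂μ :=
        (integral_condExp hF).symm
    _ = ∫ ω, g ω * q ω ∂μ := integral_congr_ae (hmul.trans h2)

section facts
variable {Ω : Type*} {w : ℕ → ℝ} {R : ℕ → Ω → ℕ} (hw : ∀ j, 0 ≤ w j) (hw1 : 0 < w 1)

lemma herd_Sw_succ (i : ℕ) : Sw w (i + 1) = Sw w i + w (i + 1) := by
  unfold Sw
  rw [Finset.sum_Icc_succ_top (by omega : 1 ≤ i + 1)]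

include hw hw1 in
lemma herd_Sw_pos {i : ℕ} (hi : 1 ≤ i) : 0 < Sw w i :=
  lt_of_lt_of_le hw1 (Finset.single_le_sum (fun j _ => hw j)
    (Finset.mem_Icc.2 ⟨le_refl 1, hi⟩))

lemma herd_Sw_one : Sw w 1 = w 1 := by simp [Sw]

include hw1 in
lemma herd_wnorm_one : wnorm w 1 = 1 := by
  rw [wnorm, herd_Sw_one, div_self hw1.ne']

include hw hw1 in
lemma herd_wnorm_mem {i : ℕ} (hi : 1 ≤ i) : wnorm w i ∈ Set.Icc (0:ℝ) 1 := by
  have hS := herd_Sw_pos hw hw1 hi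
  have hle : w i ≤ Sw w i :=
    Finset.single_le_sum (fun j _ => hw j) (Finset.mem_Icc.2 ⟨hi, le_refl i⟩)
  exact ⟨div_nonneg (hw i) hS.le, (div_le_one hS).2 hle⟩

include hw hw1 in
lemma herd_wnorm_lt_one (k : ℕ) : wnorm w (k + 2) < 1 := by
  have hS := herd_Sw_pos hw hw1 (by omega : 1 ≤ k + 1)
  have h2 : Sw w (k + 2) = Sw w (k + 1) + w (k + 2) := herd_Sw_succ _
  have hSpos : 0 < Sw w (k + 2) := by linarith [hw (k + 2)]
  rw [wnorm, div_lt_one hSpos]; linarith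

include hw hw1 in
lemma herd_varphi_pos {γ η : ℕ → ℝ} (hγ : ∀ i, γ i ∈ Set.Icc (0:ℝ) 1)
    (hη : ∀ i, η i ∈ Set.Icc (0:ℝ) 1) (j : ℕ) : 0 < varphi (wnorm w) γ η j := by
  refine Finset.prod_pos fun ℓ hℓ => ?_
  obtain ⟨hℓ1, -⟩ := Finset.mem_Icc.1 hℓ
  obtain ⟨k, rfl⟩ : ∃ k, ℓ = k + 1 := ⟨ℓ - 1, by omega⟩
  have hu1 : 1 - γ (k+1) + η (k+1) * γ (k+1) ≤ 1 := by
    nlinarith [(hγ (k+1)).1, (hγ (k+1)).2, (hη (k+1)).1, (hη (k+1)).2]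
  have hu0 : 0 ≤ 1 - γ (k+1) + η (k+1) * γ (k+1) := by
    nlinarith [(hγ (k+1)).1, (hγ (k+1)).2, (hη (k+1)).1, (hη (k+1)).2]
  have hwlt := herd_wnorm_lt_one hw hw1 k
  have hw0 := (herd_wnorm_mem hw hw1 (by omega : 1 ≤ k + 2)).1
  nlinarith

lemma herd_varphi_succ (wt γ η : ℕ → ℝ) (k : ℕ) :
    varphi wt γ η (k + 1)
      = varphi wt γ η k * (1 - wt (k + 2) * (1 - γ (k+1) + η (k+1) * γ (k+1))) := by
  unfold varphi
  rw [Finset.prod_Icc_succ_top (by omega : 1 ≤ k + 1)]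

include hw hw1 in
lemma herd_betaH_mem {i m : ℕ} (hi : 1 ≤ i) (ω : Ω) :
    betaH w R i m ω ∈ Set.Icc (0:ℝ) 1 := by
  have hS := herd_Sw_pos hw hw1 hi
  have h0 : 0 ≤ ∑ j ∈ Finset.Icc 1 i, w j * (if R j ω = m then (1:ℝ) else 0) :=
    Finset.sum_nonneg fun j _ => mul_nonneg (hw j) (by split <;> norm_num)
  have h1 : ∑ j ∈ Finset.Icc 1 i, w j * (if R j ω = m then (1:ℝ) else 0) ≤ Sw w i := by
    refine Finset.sum_le_sum fun j _ => ?_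
    split <;> simp [hw j]
  exact ⟨div_nonneg h0 hS.le, (div_le_one hS).2 h1⟩

include hw1 in
lemma herd_betaH_one (m : ℕ) (ω : Ω) :
    betaH w R 1 m ω = (if R 1 ω = m then (1:ℝ) else 0) := by
  simp only [betaH, herd_Sw_one]
  rw [Finset.Icc_self, Finset.sum_singleton]
  field_simp

include hw hw1 in
lemma herd_betaH_succ {i : ℕ} (hi : 1 ≤ i) (m : ℕ) (ω : Ω) :
    betaH w R (i+1) m ω = (1 - wnorm w (i+1)) * betaH w R i m ω
      + wnorm w (i+1) * (if R (i+1) ω = m then (1:ℝ) else 0) := by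
  have hS := herd_Sw_pos hw hw1 hi
  have hS2 : Sw w (i+1) = Sw w i + w (i+1) := herd_Sw_succ _
  have hS2pos : 0 < Sw w (i+1) := by rw [hS2]; linarith [hw (i+1)]
  have hnum : (∑ j ∈ Finset.Icc 1 (i+1), w j * (if R j ω = m then (1:ℝ) else 0))
      = (∑ j ∈ Finset.Icc 1 i, w j * (if R j ω = m then (1:ℝ) else 0))
        + w (i+1) * (if R (i+1) ω = m then (1:ℝ) else 0) :=
    Finset.sum_Icc_succ_top (by omega : 1 ≤ i + 1) _
  have hb : ∀ A b : ℝ, (A + w (i+1) * b) / (Sw w i + w (i+1))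
      = (1 - w (i+1) / (Sw w i + w (i+1))) * (A / Sw w i)
        + w (i+1) / (Sw w i + w (i+1)) * b := by
    intro A b
    rw [hS2] at hS2pos
    field_simp
    ring
  rw [betaH, betaH, wnorm, hnum, hS2]
  exact hb _ _

end facts

section meas
variable {Ω : Type*} {R : ℕ → Ω → ℕ}

lemma herd_meas_ind {F : MeasurableSpace Ω} {j m : ℕ} (h : Measurable[F] (R j)) :
    Measurable[F] fun ω => (if R j ω = m then (1:ℝ) else 0) := by
  exact (measurable_from_top (f := fun n : ℕ => if n = m then (1:ℝ) else 0)).comp h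

lemma herd_meas_betaH {F : MeasurableSpace Ω} {w : ℕ → ℝ} {n m : ℕ}
    (h : ∀ j ∈ Finset.Icc 1 n, Measurable[F] (R j)) :
    Measurable[F] (betaH w R n m) := by
  unfold betaH
  apply Measurable.div_const
  exact Finset.measurable_sum _ fun j hj => (measurable_const.mul (herd_meas_ind (h j hj)))

lemma herd_Hsig_le [m0 : MeasurableSpace Ω] (hR : ∀ i, Measurable (R i)) (n : ℕ) :
    Hsig R n ≤ m0 := by
  refine iSup₂_le fun j _ => ?_
  exact (hR j).comap_le

lemma herd_meas_R_Hsig {n j : ℕ} (hj : j ∈ Finset.Icc 1 n) :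
    Measurable[Hsig R n] (R j) := by
  rw [measurable_iff_comap_le]
  exact le_biSup (fun j => MeasurableSpace.comap (R j) (⊤ : MeasurableSpace ℕ)) hj

lemma herd_Hsig_mono {n n' : ℕ} (h : n ≤ n') : Hsig R n ≤ Hsig R n' := by
  refine iSup₂_le fun j hj => ?_
  refine le_biSup (fun j => MeasurableSpace.comap (R j) (⊤ : MeasurableSpace ℕ))
    (?_ : j ∈ Finset.Icc 1 n')
  rw [Finset.mem_Icc] at *
  omega

end meas

lemma herd_varphi_zero (wt γ η : ℕ → ℝ) : varphi wt γ η 0 = 1 := by simp [varphi]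

/-- The MGF bound for the per-level martingale. -/
lemma herd_mgf {Ω : Type*} [MeasurableSpace Ω] (μ : Measure Ω) [IsProbabilityMeasure μ]
    (α : ℕ → ℝ) (R : ℕ → Ω → ℕ) (hRmeas : ∀ i, Measurable (R i))
    (w : ℕ → ℝ) (hw : ∀ j, 0 ≤ w j) (hw1 : 0 < w 1)
    (γ : ℕ → ℝ) (hγ : ∀ i, γ i ∈ Set.Icc (0 : ℝ) 1)
    (η : ℕ → ℝ) (hη : ∀ i, η i ∈ Set.Icc (0 : ℝ) 1)
    (m : ℕ) (hαm : α m ∈ Set.Icc (0 : ℝ) 1)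
    (hR1 : μ {ω | R 1 ω = m} = ENNReal.ofReal (α m))
    (hmodel : ∀ i : ℕ, 1 ≤ i →
      μ[(fun ω => if R (i + 1) ω = m then (1 : ℝ) else 0) | Hsig R i]
        =ᵐ[μ] fun ω =>
          γ i * ((1 - η i) * betaH w R i m ω + η i * α m) + (1 - γ i) * α m) :
    ∀ k : ℕ, ∀ c : ℝ,
      ∫ ω, Real.exp (c * ((betaH w R (k+1) m ω - α m) / varphi (wnorm w) γ η k)) ∂μ
        ≤ Real.exp (c ^ 2 / 2 *
            ∑ j ∈ Finset.Icc 1 (k+1), (wnorm w j) ^ 2 / (varphi (wnorm w) γ η (j-1)) ^ 2) := by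
  intro k
  induction k with
  | zero =>
    intro c
    have hV : ∑ j ∈ Finset.Icc 1 1, (wnorm w j) ^ 2 / (varphi (wnorm w) γ η (j-1)) ^ 2 = 1 := by
      rw [Finset.Icc_self, Finset.sum_singleton]
      simp [herd_wnorm_one hw1, herd_varphi_zero]
    rw [hV, mul_one]
    have hXmeas : Measurable fun ω => (if R 1 ω = m then (1:ℝ) else 0) :=
      herd_meas_ind (hRmeas 1)
    have hint : ∫ ω, (if R 1 ω = m then (1:ℝ) else 0) ∂μ = α m := by
      have hs : MeasurableSet {ω | R 1 ω = m} := by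
        have := (hRmeas 1) (MeasurableSet.singleton m)
        simpa [Set.preimage, Set.mem_singleton_iff] using this
      have heq : (fun ω => if R 1 ω = m then (1:ℝ) else 0)
          = Set.indicator {ω | R 1 ω = m} (fun _ => (1:ℝ)) := by
        funext ω; by_cases h : R 1 ω = m <;> simp [Set.indicator_apply, h, Set.mem_setOf_eq]
      rw [heq, integral_indicator_const (1:ℝ) hs, measureReal_def, hR1, smul_eq_mul, mul_one,
        ENNReal.toReal_ofReal hαm.1]
    have key := herd_key_mgf μ (fun _ => 1) (fun ω => if R 1 ω = m then (1:ℝ) else 0)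
      (fun _ => α m) c 1 measurable_const (fun _ => zero_le_one) (fun _ => by norm_num)
      hXmeas measurable_const
      (fun ω => by split <;> norm_num)
      (fun ω => abs_le.2 ⟨by linarith [hαm.1], hαm.2⟩)
      (fun ω => by split <;> (rw [abs_le]; constructor <;> linarith [hαm.1, hαm.2]))
      (by simp [hint])
    simp only [one_mul, integral_const, measure_univ, ENNReal.toReal_one, probReal_univ, smul_eq_mul,
      mul_one] at key
    calc ∫ ω, Real.exp (c * ((betaH w R 1 m ω - α m) / varphi (wnorm w) γ η 0)) ∂μ
        = ∫ ω, Real.exp (c * ((if R 1 ω = m then (1:ℝ) else 0) - α m)) ∂μ := by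
          refine integral_congr_ae (ae_of_all _ fun ω => ?_)
          dsimp only
          rw [herd_betaH_one hw1, herd_varphi_zero, div_one]
      _ ≤ Real.exp (c ^ 2 / 2) := key
  | succ k ih =>
    intro c
    simp only [show k+1+1 = k+2 from rfl]
    have hφk : 0 < varphi (wnorm w) γ η k := herd_varphi_pos hw hw1 hγ hη k
    have hφk1 : 0 < varphi (wnorm w) γ η (k+1) := herd_varphi_pos hw hw1 hγ hη (k+1)
    set φ : ℕ → ℝ := varphi (wnorm w) γ η with hφ
    set β : Ω → ℝ := betaH w R (k+1) m with hβdef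
    set X : Ω → ℝ := fun ω => if R (k+2) ω = m then (1:ℝ) else 0 with hXdef
    set q : Ω → ℝ := fun ω =>
      γ (k+1) * ((1 - η (k+1)) * β ω + η (k+1) * α m) + (1 - γ (k+1)) * α m with hqdef
    set g : Ω → ℝ := fun ω => Real.exp (c * ((β ω - α m) / φ k)) with hgdef
    set d : ℝ := wnorm w (k+2) / φ (k+1) with hddef
    have hβmem : ∀ ω, β ω ∈ Set.Icc (0:ℝ) 1 :=
      fun ω => herd_betaH_mem hw hw1 (by omega : 1 ≤ k+1) ω
    have hγm := hγ (k+1); have hηm := hη (k+1)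
    have hq01 : ∀ ω, q ω ∈ Set.Icc (0:ℝ) 1 := by
      intro ω
      obtain ⟨hb0, hb1⟩ := hβmem ω
      constructor
      · simp only [hqdef]
        have h1 : 0 ≤ (1 - η (k+1)) * β ω + η (k+1) * α m := by
          nlinarith [hηm.1, hηm.2, hαm.1]
        nlinarith [hγm.1, hγm.2, hαm.1]
      · simp only [hqdef]
        have h1 : (1 - η (k+1)) * β ω + η (k+1) * α m ≤ 1 := by
          nlinarith [hηm.1, hηm.2, hαm.2]
        nlinarith [hγm.1, hγm.2, hαm.2]
    have hX01 : ∀ ω, X ω ∈ Set.Icc (0:ℝ) 1 := by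
      intro ω; rw [hXdef]; dsimp only; split <;> norm_num
    -- the key pointwise identity
    have hE : φ (k+1) = φ k * (1 - wnorm w (k+2) * (1 - γ (k+1) + η (k+1) * γ (k+1))) :=
      herd_varphi_succ (wnorm w) γ η k
    have hEpos : 0 < 1 - wnorm w (k+2) * (1 - γ (k+1) + η (k+1) * γ (k+1)) := by
      by_contra h
      push_neg at h
      nlinarith
    have hkey : ∀ ω, c * ((betaH w R (k+2) m ω - α m) / φ (k+1))
        = c * ((β ω - α m) / φ k) + (c * d) * (X ω - q ω) := by
      intro ω
      have hrec : betaH w R (k+2) m ω = (1 - wnorm w (k+2)) * β ω + wnorm w (k+2) * X ω :=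
        herd_betaH_succ hw hw1 (by omega : 1 ≤ k+1) m ω
      rw [hrec, hE, hddef, hqdef, hE]
      rw [← mul_div_mul_right (β ω - α m) (φ k) hEpos.ne']
      ring
    have hint_eq : ∫ ω, Real.exp (c * ((betaH w R (k+2) m ω - α m) / φ (k+1))) ∂μ
        = ∫ ω, g ω * Real.exp ((c * d) * (X ω - q ω)) ∂μ := by
      refine integral_congr_ae (ae_of_all _ fun ω => ?_)
      dsimp only
      rw [hkey ω, Real.exp_add]
    -- measurability
    have hβmeas : Measurable β := herd_meas_betaH (fun j _ => hRmeas j)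
    have hgmeas : Measurable g :=
      (((hβmeas.sub measurable_const).div_const (φ k)).const_mul c).exp
    have hXmeas : Measurable X := herd_meas_ind (hRmeas (k+2))
    have hqmeas : Measurable q := by
      apply Measurable.add
      · exact ((((measurable_const.mul hβmeas)).add measurable_const).const_mul _)
      · exact measurable_const
    have hβmeasF : Measurable[Hsig R (k+1)] β :=
      herd_meas_betaH (fun j hj => herd_meas_R_Hsig hj)
    have hgF : StronglyMeasurable[Hsig R (k+1)] g :=
      ((((hβmeasF.sub measurable_const).div_const (φ k)).const_mul c).exp).stronglyMeasurable
    -- bounds on g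
    set Cg : ℝ := Real.exp (|c| / φ k) with hCg
    have hg0 : ∀ ω, 0 ≤ g ω := fun ω => (Real.exp_pos _).le
    have hgC : ∀ ω, |g ω| ≤ Cg := by
      intro ω
      rw [hgdef, abs_of_pos (Real.exp_pos _), hCg]
      apply Real.exp_le_exp.2
      obtain ⟨hb0, hb1⟩ := hβmem ω
      calc c * ((β ω - α m) / φ k) ≤ |c * ((β ω - α m) / φ k)| := le_abs_self _
        _ = |c| * (|β ω - α m| / φ k) := by
            rw [abs_mul, abs_div, abs_of_pos hφk]
        _ ≤ |c| * (1 / φ k) := by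
            have habs : |β ω - α m| ≤ 1 :=
              abs_le.2 ⟨by linarith [hαm.2], by linarith [hαm.1]⟩
            refine mul_le_mul_of_nonneg_left ?_ (abs_nonneg c)
            gcongr
        _ = |c| / φ k := by ring
    have hX1 : ∀ ω, |X ω| ≤ 1 := fun ω =>
      abs_le.2 ⟨by linarith [(hX01 ω).1], (hX01 ω).2⟩
    have hq1 : ∀ ω, |q ω| ≤ 1 := fun ω =>
      abs_le.2 ⟨by linarith [(hq01 ω).1], (hq01 ω).2⟩
    have hXq : ∀ ω, |X ω - q ω| ≤ 1 := fun ω =>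
      abs_le.2 ⟨by linarith [(hX01 ω).1, (hq01 ω).2], by linarith [(hX01 ω).2, (hq01 ω).1]⟩
    -- integrability
    have hgXi : Integrable (fun ω => g ω * X ω) μ := by
      refine herd_integrable_of_bound μ _ Cg (hgmeas.mul hXmeas) fun ω => ?_
      rw [abs_mul]
      have := mul_le_mul (hgC ω) (hX1 ω) (abs_nonneg _) ((abs_nonneg (g ω)).trans (hgC ω))
      simpa using this
    have hgqi : Integrable (fun ω => g ω * q ω) μ := by
      refine herd_integrable_of_bound μ _ Cg (hgmeas.mul hqmeas) fun ω => ?_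
      rw [abs_mul]
      have := mul_le_mul (hgC ω) (hq1 ω) (abs_nonneg _) ((abs_nonneg (g ω)).trans (hgC ω))
      simpa using this
    have hXi : Integrable X μ := herd_integrable_of_bound μ _ 1 hXmeas hX1
    -- orthogonality from the model
    have hcond : μ[X | Hsig R (k+1)] =ᵐ[μ] q := hmodel (k+1) (by omega)
    have horth : ∫ ω, g ω * X ω ∂μ = ∫ ω, g ω * q ω ∂μ :=
      herd_orth μ (herd_Hsig_le hRmeas (k+1)) g X q hgF hgXi hgqi hXi hcond
    -- apply the key MGF step
    have hstep := herd_key_mgf μ g X q (c * d) Cg hgmeas hg0 hgC hXmeas hqmeas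
      hX1 hq1 hXq horth
    -- combine with induction hypothesis
    have hih := ih c
    have hVsucc : ∑ j ∈ Finset.Icc 1 (k+2), (wnorm w j) ^ 2 / (φ (j-1)) ^ 2
        = (∑ j ∈ Finset.Icc 1 (k+1), (wnorm w j) ^ 2 / (φ (j-1)) ^ 2)
          + (wnorm w (k+2)) ^ 2 / (φ (k+1)) ^ 2 := by
      rw [Finset.sum_Icc_succ_top (by omega : 1 ≤ k+2)]
      norm_num
    calc ∫ ω, Real.exp (c * ((betaH w R (k+2) m ω - α m) / φ (k+1))) ∂μ
        = ∫ ω, g ω * Real.exp ((c * d) * (X ω - q ω)) ∂μ := hint_eq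
      _ ≤ Real.exp ((c * d) ^ 2 / 2) * ∫ ω, g ω ∂μ := hstep
      _ ≤ Real.exp ((c * d) ^ 2 / 2)
            * Real.exp (c ^ 2 / 2 * ∑ j ∈ Finset.Icc 1 (k+1), (wnorm w j) ^ 2 / (φ (j-1)) ^ 2) :=
          mul_le_mul_of_nonneg_left hih (Real.exp_pos _).le
      _ = Real.exp (c ^ 2 / 2 * ∑ j ∈ Finset.Icc 1 (k+2), (wnorm w j) ^ 2 / (φ (j-1)) ^ 2) := by
          rw [← Real.exp_add, hVsucc]
          congr 1
          rw [hddef]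
          field_simp
          ring

set_option maxHeartbeats 2000000 in
/-- Under the linear herding model with no misbehaving ratings, if `α`
has a unique largest entry `α_max = α m*` with second largest value `α_secmax`, and
`φ_i ≥ (M²(M+1)²/(α_max − α_secmax)²) ln(2M/δ)`, then with probability at least
`1 − δ` the entry `β_{i,m*}` is strictly the largest, so the majority rule applied
to `β_i` returns `m* = argmax_m α_m`. -/
theorem stmt_9
    {Ω : Type*} [MeasurableSpace Ω] (μ : Measure Ω) [IsProbabilityMeasure μ]
    (M : ℕ) (hM : 1 ≤ M)
    (α : ℕ → ℝ) (hα : ∀ m ∈ Finset.Icc 1 M, α m ∈ Set.Icc (0 : ℝ) 1)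
    (hα1 : ∑ m ∈ Finset.Icc 1 M, α m = 1)
    (R : ℕ → Ω → ℕ) (hRrange : ∀ i, 1 ≤ i → ∀ ω, R i ω ∈ Finset.Icc 1 M)
    (hRmeas : ∀ i, Measurable (R i))
    (w : ℕ → ℝ) (hw : ∀ j, 0 ≤ w j) (hw1 : 0 < w 1)
    (γ : ℕ → ℝ) (hγ : ∀ i, γ i ∈ Set.Icc (0 : ℝ) 1)
    (hγsup : ∃ g, g < 1 ∧ ∀ i, γ i ≤ g)
    (η : ℕ → ℝ) (hη : ∀ i, η i ∈ Set.Icc (0 : ℝ) 1)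
    -- `P[R_1 = m] = α_m`
    (hR1 : ∀ m ∈ Finset.Icc 1 M, μ {ω | R 1 ω = m} = ENNReal.ofReal (α m))
    -- linear herding model
    (hmodel : ∀ i : ℕ, 1 ≤ i → ∀ m ∈ Finset.Icc 1 M,
      μ[(fun ω => if R (i + 1) ω = m then (1 : ℝ) else 0) | Hsig R i]
        =ᵐ[μ] fun ω =>
          γ i * ((1 - η i) * betaH w R i m ω + η i * α m) + (1 - γ i) * α m)
    -- Condition (2): `∑ w̃_i = ∞` and `∑ w̃_i² < ∞`
    (hdiv : Tendsto (fun n => ∑ i ∈ Finset.Icc 1 n, wnorm w i) atTop atTop)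
    (hsq : Summable fun i : ℕ => (wnorm w (i + 1)) ^ 2)
    -- unique largest entry `m*` with second largest value `αsec`
    (mstar : ℕ) (hmstar : mstar ∈ Finset.Icc 1 M)
    (αsec : ℝ)
    (hsec_ub : ∀ m ∈ Finset.Icc 1 M, m ≠ mstar → α m ≤ αsec)
    (hsec_mem : ∃ m ∈ Finset.Icc 1 M, m ≠ mstar ∧ α m = αsec)
    (hgap : αsec < α mstar)
    (δ : ℝ) (hδ0 : 0 < δ) (hδ1 : δ < 1)
    (i : ℕ) (hi : 1 ≤ i)
    (hphi : ((M : ℝ) ^ 2 * ((M : ℝ) + 1) ^ 2 / (α mstar - αsec) ^ 2)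
        * Real.log (2 * M / δ) ≤ phiSpeed (wnorm w) γ η i) :
    ENNReal.ofReal (1 - δ) ≤
      μ {ω | ∀ m ∈ Finset.Icc 1 M, m ≠ mstar →
        betaH w R i m ω < betaH w R i mstar ω} := by

  classical
  obtain ⟨k, rfl⟩ : ∃ k, i = k + 1 := ⟨i - 1, by omega⟩
  -- basic positivity facts
  have hφk : 0 < varphi (wnorm w) γ η k := herd_varphi_pos hw hw1 hγ hη k
  set V : ℝ := ∑ j ∈ Finset.Icc 1 (k+1),
    (wnorm w j) ^ 2 / (varphi (wnorm w) γ η (j-1)) ^ 2 with hVdef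
  have hV1 : (1:ℝ) ≤ V := by
    have hmem : (1:ℕ) ∈ Finset.Icc 1 (k+1) := Finset.mem_Icc.2 ⟨le_refl 1, by omega⟩
    have h2 := Finset.single_le_sum
      (f := fun j => (wnorm w j) ^ 2 / (varphi (wnorm w) γ η (j-1)) ^ 2)
      (fun j _ => by positivity) hmem
    rw [hVdef]
    simpa [herd_wnorm_one hw1, herd_varphi_zero] using h2
  have hVpos : 0 < V := lt_of_lt_of_le one_pos hV1
  set φS : ℝ := phiSpeed (wnorm w) γ η (k+1) with hφSdef
  have hφS : φS = 1 / ((varphi (wnorm w) γ η k) ^ 2 / 2 * V) := by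
    rw [hφSdef, phiSpeed, Nat.add_sub_cancel]
  have hφSpos : 0 < φS := by rw [hφS]; positivity
  have hinv : (varphi (wnorm w) γ η k) ^ 2 / 2 * V = 1 / φS := by
    rw [hφS, one_div_one_div]
  -- sizes
  have hM2 : 2 ≤ M := by
    obtain ⟨m', hm', hne, -⟩ := hsec_mem
    have h1 := Finset.mem_Icc.1 hm'
    have h2 := Finset.mem_Icc.1 hmstar
    omega
  have hM2R : (2:ℝ) ≤ (M:ℝ) := by exact_mod_cast hM2
  have hMpos : (0:ℝ) < (M:ℝ) := by linarith
  set G : ℝ := α mstar - αsec with hGdef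
  have hG : 0 < G := by rw [hGdef]; linarith
  set s : ℝ := 2 * G / 5 with hsdef
  have hspos : 0 < s := by rw [hsdef]; linarith
  set L : ℝ := Real.log (2 * M / δ) with hLdef
  clear_value V φS G s L
  have hLpos : 0 < L := by
    rw [hLdef]
    apply Real.log_pos
    rw [lt_div_iff₀ hδ0]
    linarith
  -- the exponent inequality
  have hexp : Real.exp (-(s ^ 2 * φS / 4)) ≤ δ / (2 * M) := by
    have h2M : (0:ℝ) < δ / (2 * M) := by positivity
    rw [← Real.exp_log h2M]
    apply Real.exp_le_exp.2
    have hlogeq : Real.log (δ / (2 * M)) = -L := by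
      rw [hLdef, ← Real.log_inv, inv_div]
    rw [hlogeq, neg_le_neg_iff]
    -- L ≤ s^2 * φS / 4
    have h36 : (36:ℝ) ≤ (M:ℝ)^2 * ((M:ℝ)+1)^2 := by
      have hM4 : (4:ℝ) ≤ (M:ℝ)^2 := by nlinarith
      have hM9 : (9:ℝ) ≤ ((M:ℝ)+1)^2 := by nlinarith
      nlinarith [mul_le_mul hM4 hM9 (by norm_num : (0:ℝ) ≤ 9)
        (by positivity : (0:ℝ) ≤ (M:ℝ)^2)]
    have hstep : G^2 * ((M:ℝ)^2 * ((M:ℝ)+1)^2 / G^2 * L) ≤ G^2 * φS :=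
      mul_le_mul_of_nonneg_left hphi (sq_nonneg G)
    have heq : G^2 * ((M:ℝ)^2 * ((M:ℝ)+1)^2 / G^2 * L) = (M:ℝ)^2 * ((M:ℝ)+1)^2 * L := by
      field_simp
    rw [heq] at hstep
    have h36L : 36 * L ≤ G^2 * φS :=
      le_trans (mul_le_mul_of_nonneg_right h36 hLpos.le) hstep
    rw [hsdef]
    have hring : (2*G/5)^2 * φS / 4 = G^2 * φS / 25 := by ring
    rw [hring]
    linarith
  have hlam0 : 0 ≤ s * φS / 2 := by positivity
  set lam0 : ℝ := s * φS / 2 with hlam0def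
  clear_value lam0
  -- one-sided Chernoff tail bound
  have tail : ∀ m ∈ Finset.Icc 1 M, ∀ σ : ℝ, (σ = 1 ∨ σ = -1) →
      μ {ω | s ≤ σ * (betaH w R (k+1) m ω - α m)} ≤ ENNReal.ofReal (δ / (2 * M)) := by
    intro m hm σ hσ
    have hσ2 : σ ^ 2 = 1 := by rcases hσ with h | h <;> rw [h] <;> norm_num
    have hβmeas : Measurable (betaH w R (k+1) m) := herd_meas_betaH (fun j _ => hRmeas j)
    set f : Ω → ℝ := fun ω => Real.exp (lam0 * (σ * (betaH w R (k+1) m ω - α m))) with hfdef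
    have hfmeas : Measurable f :=
      ((((hβmeas.sub measurable_const).const_mul σ).const_mul lam0)).exp
    clear_value f
    have hσabs : |σ| = 1 := by
      rcases hσ with h | h <;> rw [h] <;> norm_num
    have hβα : ∀ ω, |betaH w R (k+1) m ω - α m| ≤ 1 := by
      intro ω
      obtain ⟨h0, h1⟩ := herd_betaH_mem (R := R) hw hw1 (by omega : 1 ≤ k+1) ω (m := m)
      obtain ⟨ha0, ha1⟩ := hα m hm
      rw [abs_le]; constructor <;> linarith
    have hfbd : ∀ ω, |f ω| ≤ Real.exp lam0 := by
      intro ω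
      simp only [hfdef]
      rw [abs_of_pos (Real.exp_pos _)]
      apply Real.exp_le_exp.2
      calc lam0 * (σ * (betaH w R (k+1) m ω - α m))
          ≤ |lam0 * (σ * (betaH w R (k+1) m ω - α m))| := le_abs_self _
        _ = lam0 * (|σ| * |betaH w R (k+1) m ω - α m|) := by
            rw [abs_mul, abs_mul, abs_of_nonneg hlam0]
        _ ≤ lam0 * (1 * 1) := by
            refine mul_le_mul_of_nonneg_left ?_ hlam0
            rw [hσabs, one_mul]
            exact (hβα ω).trans (by norm_num)
        _ = lam0 := by ring
    have hfint : Integrable f μ := herd_integrable_of_bound μ f _ hfmeas hfbd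
    -- MGF bound
    have hmgf := herd_mgf μ α R hRmeas w hw hw1 γ hγ η hη m (hα m hm) (hR1 m hm)
      (fun i hi => hmodel i hi m hm) k (σ * lam0 * varphi (wnorm w) γ η k)
    have hLHS : ∫ ω, Real.exp ((σ * lam0 * varphi (wnorm w) γ η k)
          * ((betaH w R (k+1) m ω - α m) / varphi (wnorm w) γ η k)) ∂μ
        = ∫ ω, f ω ∂μ := by
      refine integral_congr_ae (ae_of_all _ fun ω => ?_)
      simp only [hfdef]
      congr 1
      field_simp
    have hc2 : (σ * lam0 * varphi (wnorm w) γ η k) ^ 2 / 2 * V = lam0 ^ 2 / φS := by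
      calc (σ * lam0 * varphi (wnorm w) γ η k) ^ 2 / 2 * V
          = σ ^ 2 * lam0 ^ 2 * ((varphi (wnorm w) γ η k) ^ 2 / 2 * V) := by ring
        _ = lam0 ^ 2 * (1 / φS) := by rw [hσ2, hinv]; ring
        _ = lam0 ^ 2 / φS := by ring
    rw [← hVdef] at hmgf
    rw [hLHS, hc2] at hmgf
    -- Markov
    have hmkv := mul_meas_ge_le_integral_of_nonneg
      (ae_of_all μ (fun ω => by
        simp only [hfdef]; exact (Real.exp_pos _).le) : 0 ≤ᵐ[μ] f) hfint (Real.exp (lam0 * s))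
    have hsubset : {ω | s ≤ σ * (betaH w R (k+1) m ω - α m)}
        ⊆ {ω | Real.exp (lam0 * s) ≤ f ω} := by
      intro ω hω
      simp only [Set.mem_setOf_eq] at hω ⊢
      simp only [hfdef]
      exact Real.exp_le_exp.2 (mul_le_mul_of_nonneg_left hω hlam0)
    have htail : (μ {ω | s ≤ σ * (betaH w R (k+1) m ω - α m)}).toReal
        ≤ Real.exp (-(s ^ 2 * φS / 4)) := by
      have h1 : (μ {ω | s ≤ σ * (betaH w R (k+1) m ω - α m)}).toReal
          ≤ (μ {ω | Real.exp (lam0 * s) ≤ f ω}).toReal :=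
        ENNReal.toReal_mono (measure_ne_top μ _) (measure_mono hsubset)
      have h2 : (μ {ω | Real.exp (lam0 * s) ≤ f ω}).toReal
          ≤ Real.exp (lam0 ^ 2 / φS) / Real.exp (lam0 * s) := by
        rw [le_div_iff₀ (Real.exp_pos _)]
        calc (μ {ω | Real.exp (lam0 * s) ≤ f ω}).toReal * Real.exp (lam0 * s)
            = Real.exp (lam0 * s) * (μ {ω | Real.exp (lam0 * s) ≤ f ω}).toReal := by ring
          _ ≤ ∫ ω, f ω ∂μ := hmkv
          _ ≤ Real.exp (lam0 ^ 2 / φS) := hmgf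
      have h3 : Real.exp (lam0 ^ 2 / φS) / Real.exp (lam0 * s)
          = Real.exp (-(s ^ 2 * φS / 4)) := by
        rw [← Real.exp_sub]
        congr 1
        rw [hlam0def]
        field_simp
        ring
      linarith
    calc μ {ω | s ≤ σ * (betaH w R (k+1) m ω - α m)}
        = ENNReal.ofReal ((μ {ω | s ≤ σ * (betaH w R (k+1) m ω - α m)}).toReal) :=
          (ENNReal.ofReal_toReal (measure_ne_top μ _)).symm
      _ ≤ ENNReal.ofReal (δ / (2 * M)) :=
          ENNReal.ofReal_le_ofReal (htail.trans hexp)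
  -- two-sided bound for each m
  have hBmeas : ∀ m : ℕ, MeasurableSet {ω | s ≤ |betaH w R (k+1) m ω - α m|} := by
    intro m
    exact measurableSet_le measurable_const
      ((herd_meas_betaH (fun j _ => hRmeas j)).sub measurable_const).abs
  have hB : ∀ m ∈ Finset.Icc 1 M,
      μ {ω | s ≤ |betaH w R (k+1) m ω - α m|} ≤ ENNReal.ofReal (δ / M) := by
    intro m hm
    have hsub : {ω | s ≤ |betaH w R (k+1) m ω - α m|}
        ⊆ {ω | s ≤ 1 * (betaH w R (k+1) m ω - α m)}
          ∪ {ω | s ≤ (-1) * (betaH w R (k+1) m ω - α m)} := by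
      intro ω hω
      simp only [Set.mem_setOf_eq, Set.mem_union] at hω ⊢
      rcases le_abs.1 hω with h | h
      · left; linarith
      · right; linarith
    calc μ {ω | s ≤ |betaH w R (k+1) m ω - α m|}
        ≤ μ ({ω | s ≤ 1 * (betaH w R (k+1) m ω - α m)}
            ∪ {ω | s ≤ (-1) * (betaH w R (k+1) m ω - α m)}) := measure_mono hsub
      _ ≤ μ {ω | s ≤ 1 * (betaH w R (k+1) m ω - α m)}
            + μ {ω | s ≤ (-1) * (betaH w R (k+1) m ω - α m)} := measure_union_le _ _
      _ ≤ ENNReal.ofReal (δ / (2 * M)) + ENNReal.ofReal (δ / (2 * M)) :=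
          add_le_add (tail m hm 1 (Or.inl rfl)) (tail m hm (-1) (Or.inr rfl))
      _ = ENNReal.ofReal (δ / (2 * M) + δ / (2 * M)) :=
          (ENNReal.ofReal_add (by positivity) (by positivity)).symm
      _ = ENNReal.ofReal (δ / M) := by
          congr 1
          field_simp
          ring
  -- union bound
  set Bad : Set Ω := ⋃ m ∈ Finset.Icc 1 M, {ω | s ≤ |betaH w R (k+1) m ω - α m|} with hBad
  have hBadMeas : MeasurableSet Bad :=
    (Finset.Icc 1 M).measurableSet_biUnion fun m _ => hBmeas m
  have hμBad : μ Bad ≤ ENNReal.ofReal δ := by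
    calc μ Bad ≤ ∑ m ∈ Finset.Icc 1 M, μ {ω | s ≤ |betaH w R (k+1) m ω - α m|} :=
        measure_biUnion_finset_le _ _
      _ ≤ ∑ m ∈ Finset.Icc 1 M, ENNReal.ofReal (δ / M) :=
        Finset.sum_le_sum fun m hm => hB m hm
      _ = (M : ENNReal) * ENNReal.ofReal (δ / M) := by
        rw [Finset.sum_const, Nat.card_Icc]
        simp [nsmul_eq_mul]
      _ = ENNReal.ofReal δ := by
        rw [← ENNReal.ofReal_natCast M, ← ENNReal.ofReal_mul (by positivity)]
        congr 1
        field_simp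
  -- complement is inside the target event
  have hcompl : Badᶜ ⊆ {ω | ∀ m ∈ Finset.Icc 1 M, m ≠ mstar →
      betaH w R (k+1) m ω < betaH w R (k+1) mstar ω} := by
    intro ω hω
    simp only [hBad, Set.compl_iUnion, Set.mem_iInter, Set.mem_compl_iff,
      Set.mem_setOf_eq, not_le] at hω
    intro m hm hne
    have h1 := hω m hm
    have h2 := hω mstar hmstar
    rw [abs_lt] at h1 h2
    have h3 := hsec_ub m hm hne
    have hs25 : s = 2 * G / 5 := hsdef
    have hGe : G = α mstar - αsec := hGdef
    linarith [h1.1, h1.2, h2.1, h2.2]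
  -- conclude
  have h0 : ENNReal.ofReal (1 - δ) = 1 - ENNReal.ofReal δ := by
    rw [← ENNReal.ofReal_one, ← ENNReal.ofReal_sub _ hδ0.le]
  calc ENNReal.ofReal (1 - δ)
      = 1 - ENNReal.ofReal δ := h0
    _ ≤ 1 - μ Bad := tsub_le_tsub_left hμBad 1
    _ = μ Set.univ - μ Bad := by rw [measure_univ]
    _ = μ Badᶜ := (measure_compl hBadMeas (measure_ne_top μ _)).symm
    _ ≤ μ {ω | ∀ m ∈ Finset.Icc 1 M, m ≠ mstar →
          betaH w R (k+1) m ω < betaH w R (k+1) mstar ω} := measure_mono hcompl
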